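/- arXiv:math/0508585 — 3 statements merged into one kernel-verified Lean document; each statement's English description precedes it below -/
import Mathlib

section
/- For a rate-1 Yule process started from one individual, conditioned on Y_t ≥ 2, the death time s of the most recent common ancestor of a uniformly sampled pair of individuals at time t has distribution function Q_0^{(t)}(s ≤ u) = [1 - 2u e^{-u} - e^{-2u} + e^{-t}(2u - 3 + 4e^{-u} - e^{-2u})] / [(1 - e^{-t})(1 - e^{-u})^2] for 0 < u < t. -/
open MeasureTheory ProbabilityTheory Real
open Filter

/-- The joint density of (coalescence time, population size just after coalescence,
population size at time `t`) for a sampled pair from a rate-1 Yule process: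
`C(j-2, i-2) · (2(j+1)/(i(i+1))) · e^{-(t-v)i}(1-e^{-(t-v)})^{j-i} e^{-v}(1-e^{-v})^{i-2}`. -/
noncomputable def yuleJointDensity (t : ℝ) (i j : ℕ) (v : ℝ) : ℝ :=
  (Nat.choose (j - 2) (i - 2) : ℝ) * (2 * ((j : ℝ) + 1) / ((i : ℝ) * ((i : ℝ) + 1))) *
    Real.exp (-(t - v) * (i : ℝ)) * (1 - Real.exp (-(t - v))) ^ (j - i) *
    Real.exp (-v) * (1 - Real.exp (-v)) ^ (i - 2)

lemma yule_density_nonneg (t : ℝ) (i j : ℕ) {v : ℝ} (h0 : 0 ≤ v) (hvt : v ≤ t) :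
    0 ≤ yuleJointDensity t i j v := by
  have h1 : (0:ℝ) ≤ 1 - Real.exp (-(t - v)) := by
    have := Real.exp_le_one_iff.mpr (by linarith : -(t-v) ≤ 0)
    linarith
  have h2 : (0:ℝ) ≤ 1 - Real.exp (-v) := by
    have := Real.exp_le_one_iff.mpr (by linarith : -v ≤ 0)
    linarith
  unfold yuleJointDensity
  positivity

lemma yule_density_continuous (t : ℝ) (i j : ℕ) : Continuous (yuleJointDensity t i j) := by
  unfold yuleJointDensity
  fun_prop

lemma yule_row_hasSum (t : ℝ) {v : ℝ} (h0 : 0 < v) (hvt : v < t) (m : ℕ) :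
    HasSum (fun k : ℕ => yuleJointDensity t (m+2) (m+2+k) v)
      (Real.exp (-v) * (1 - Real.exp (-v))^m * (2*((m:ℝ)+1) + 4*Real.exp (-(t-v)))
        / (((m:ℝ)+2)*((m:ℝ)+3))) := by
  set a : ℝ := Real.exp (-(t - v)) with ha
  set x : ℝ := 1 - a with hx
  have hapos : 0 < a := Real.exp_pos _
  have halt : a < 1 := Real.exp_lt_one_iff.mpr (by linarith)
  have hxnorm : ‖x‖ < 1 := by
    rw [Real.norm_eq_abs, abs_lt]; constructor <;> [linarith; linarith]
  have h1 := hasSum_choose_mul_geometric_of_norm_lt_one (𝕜 := ℝ) (m+1) hxnorm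
  have h2 := hasSum_choose_mul_geometric_of_norm_lt_one (𝕜 := ℝ) m hxnorm
  have h1x : (1 : ℝ) - x = a := by ring
  rw [h1x] at h1 h2
  set b : ℝ := Real.exp (-v) with hb
  set y : ℝ := 1 - b with hy
  set C : ℝ := 2 * b * y^m * a^(m+2) / (((m:ℝ)+2)*((m:ℝ)+3)) with hC
  have H1 : HasSum (fun k : ℕ => (((k+m).choose m : ℕ):ℝ) * ((m:ℝ)+(k:ℝ)+3) * x^k)
      (((m:ℝ)+1) * (1/a^(m+1+1)) + 2*(1/a^(m+1))) := by
    have H := (h1.mul_left (((m:ℝ)+1))).add (h2.mul_left 2)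
    convert H using 1
    · rfl
    funext k
    have h := Nat.add_one_mul_choose_eq (k+m) m
    have hc : (((k+m+1) : ℕ):ℝ) * (((k+m).choose m : ℕ):ℝ) =
        (((k+m+1).choose (m+1) : ℕ):ℝ) * (((m+1):ℕ):ℝ) := by
      exact_mod_cast congrArg (Nat.cast : ℕ → ℝ) (by simpa [Nat.succ_eq_add_one] using h)
    have e5 : k + (m+1) = k + m + 1 := by omega
    rw [e5]
    push_cast at hc ⊢
    linear_combination (x^k) * hc
  have H2 := H1.mul_left C
  convert H2 using 1
  · rfl
  · funext k
    have e1 : (m+2+k) - 2 = k + m := by omega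
    have e2 : (m+2) - 2 = m := by omega
    have e3 : (m+2+k) - (m+2) = k := by omega
    have e4 : Real.exp (-(t - v) * ((m+2 : ℕ):ℝ)) = a^(m+2) := by
      rw [ha, ← Real.exp_nat_mul]
      congr 1
      push_cast; ring
    unfold yuleJointDensity
    rw [e1, e2, e3]
    push_cast
    rw [show -(t - v) * ((m:ℝ)+2) = -(t-v) * (((m+2:ℕ)):ℝ) from by push_cast; ring, e4, hC]
    have hm2 : ((m:ℝ)+2) ≠ 0 := by positivity
    have hm3 : ((m:ℝ)+3) ≠ 0 := by positivity
    have e6 : Real.exp (v - t) = a := by rw [ha]; congr 1; ring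
    field_simp
    rw [hx, hy, hb, ha]
    ring
  · rw [hC]
    have hane : a ≠ 0 := ne_of_gt hapos
    have hm2 : ((m:ℝ)+2) ≠ 0 := by positivity
    have hm3 : ((m:ℝ)+3) ≠ 0 := by positivity
    field_simp
    ring

noncomputable def yuleA (t v : ℝ) (i : ℕ) : ℝ :=
  if 2 ≤ i then
    Real.exp (-v) * (1 - Real.exp (-v))^(i-2) * (2*((i:ℝ)-1) + 4*Real.exp (-(t-v)))
      / ((i:ℝ)*((i:ℝ)+1))
  else 0

lemma yule_row_hasSum' (t : ℝ) {v : ℝ} (h0 : 0 < v) (hvt : v < t) (i : ℕ) :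
    HasSum (fun j : ℕ => if 2 ≤ i ∧ i ≤ j then yuleJointDensity t i j v else 0)
      (yuleA t v i) := by
  by_cases hi : 2 ≤ i
  · obtain ⟨m, rfl⟩ : ∃ m, i = m + 2 := ⟨i - 2, by omega⟩
    apply (hasSum_nat_add_iff' (m+2)).mp
    have hzero : ∑ j ∈ Finset.range (m+2),
        (if 2 ≤ m+2 ∧ m+2 ≤ j then yuleJointDensity t (m+2) j v else 0) = 0 := by
      apply Finset.sum_eq_zero
      intro j hj
      rw [Finset.mem_range] at hj
      rw [if_neg (by omega)]
    rw [hzero, sub_zero]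
    have h := yule_row_hasSum t h0 hvt m
    convert h using 2 with n
    · rfl
    · rw [if_pos (by omega)]
      congr 1
      omega
    · simp [yuleA]
      push_cast
      ring
  · have : (fun j : ℕ => if 2 ≤ i ∧ i ≤ j then yuleJointDensity t i j v else 0) = fun _ => 0 := by
      funext j; rw [if_neg (by omega)]
    rw [this, yuleA, if_neg hi]
    exact hasSum_zero

noncomputable def yuleg (t v : ℝ) : ℝ :=
  Real.exp (-v) * ((4*Real.exp (-(t-v)) - 2) * (v - (1 - Real.exp (-v))) / (1 - Real.exp (-v))^2
    + (4 - 4*Real.exp (-(t-v))) * (v - (1 - Real.exp (-v)) - (1 - Real.exp (-v))^2/2)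
      / (1 - Real.exp (-v))^3)

lemma yule_col_hasSum (t : ℝ) {v : ℝ} (h0 : 0 < v) (hvt : v < t) :
    HasSum (yuleA t v) (yuleg t v) := by
  set b := Real.exp (-v) with hb
  set y := (1:ℝ) - b with hy
  have hbpos : 0 < b := Real.exp_pos _
  have hb1 : b < 1 := Real.exp_lt_one_iff.mpr (by linarith)
  have hy0 : 0 < y := by rw [hy]; linarith
  have hy1 : y < 1 := by rw [hy]; linarith
  have hyne : y ≠ 0 := ne_of_gt hy0
  have hyabs : |y| < 1 := by rw [abs_lt]; constructor <;> linarith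
  have hlog : HasSum (fun n : ℕ => y^(n+1)/((n:ℝ)+1)) v := by
    have h := Real.hasSum_pow_div_log_of_abs_lt_one hyabs
    rw [show (1:ℝ) - y = b from by rw [hy]; ring, hb, Real.log_exp] at h
    simpa using h
  have S2 := (hasSum_nat_add_iff' 1).mpr hlog
  have S3 := (hasSum_nat_add_iff' 2).mpr hlog
  simp only [Finset.sum_range_succ, Finset.sum_range_one] at S2 S3
  have T2 : HasSum (fun n : ℕ => y^n/((n:ℝ)+2)) ((v-y)/y^2) := by
    convert S2.mul_left ((y^2)⁻¹) using 1
    · rfl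
    · funext n
      push_cast
      rw [show n+1+1 = n+2 from rfl, pow_add]
      field_simp
      ring
    · field_simp
      try ring
  have T3 : HasSum (fun n : ℕ => y^n/((n:ℝ)+3)) ((v-y-y^2/2)/y^3) := by
    convert S3.mul_left ((y^3)⁻¹) using 1
    · rfl
    · funext n
      push_cast
      rw [show n+2+1 = n+3 from rfl, pow_add]
      field_simp
      ring
    · field_simp
      try ring
  set a := Real.exp (-(t-v)) with hA
  have main : HasSum (fun n : ℕ => yuleA t v (n+2)) (yuleg t v) := by
    convert (T2.mul_left (b*(4*a-2))).add (T3.mul_left (b*(4-4*a))) using 1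
    · rfl
    · funext n
      rw [yuleA, if_pos (by omega : 2 ≤ n+2)]
      rw [show n+2-2 = n from rfl]
      push_cast
      rw [← hb, ← hy, ← hA]
      have h2 : ((n:ℝ)+2) ≠ 0 := by positivity
      have h3 : ((n:ℝ)+3) ≠ 0 := by positivity
      field_simp
      ring
    · rw [yuleg, ← hb, ← hy, ← hA]
      field_simp
  apply (hasSum_nat_add_iff' 2).mp
  have hzero : ∑ i ∈ Finset.range 2, yuleA t v i = 0 := by
    simp [yuleA, Finset.sum_range_succ]
  rw [hzero, sub_zero]
  exact main

lemma yule_prod_hasSum (t : ℝ) {v : ℝ} (h0 : 0 < v) (hvt : v < t) :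
    HasSum (fun p : ℕ × ℕ =>
        if 2 ≤ p.1 ∧ p.1 ≤ p.2 then yuleJointDensity t p.1 p.2 v else 0)
      (yuleg t v) := by
  set F := fun p : ℕ × ℕ =>
    if 2 ≤ p.1 ∧ p.1 ≤ p.2 then yuleJointDensity t p.1 p.2 v else 0 with hF
  have hFnn : ∀ p, 0 ≤ F p := by
    intro p
    rw [hF]
    dsimp only
    split
    · exact yule_density_nonneg t _ _ h0.le hvt.le
    · exact le_refl 0
  have hrow : ∀ i, HasSum (fun j => F (i,j)) (yuleA t v i) :=
    fun i => yule_row_hasSum' t h0 hvt i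
  have hcol := yule_col_hasSum t h0 hvt
  have hsummable : Summable F := by
    rw [summable_prod_of_nonneg hFnn]
    refine ⟨fun i => (hrow i).summable, ?_⟩
    apply Summable.congr hcol.summable
    intro i
    exact (hrow i).tsum_eq.symm
  have hfib := hsummable.hasSum.prod_fiberwise hrow
  have : (∑' p, F p) = yuleg t v := hfib.unique hcol
  rw [← this]
  exact hsummable.hasSum

lemma yuleg_nonneg (t : ℝ) {v : ℝ} (h0 : 0 < v) (hvt : v < t) : 0 ≤ yuleg t v := by
  have h := yule_prod_hasSum t h0 hvt
  have := h.tsum_eq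
  rw [← this]
  apply tsum_nonneg
  intro p
  split
  · exact yule_density_nonneg t _ _ h0.le hvt.le
  · exact le_refl 0

noncomputable def yuleG (t v : ℝ) : ℝ :=
  (1 - 2 * v * Real.exp (-v) - Real.exp (-2 * v) +
      Real.exp (-t) * (2 * v - 3 + 4 * Real.exp (-v) - Real.exp (-2 * v))) /
    ((1 - Real.exp (-v)) ^ 2)

lemma yuleG_hasDerivAt (t : ℝ) {v : ℝ} (h0 : 0 < v) (hvt : v < t) :
    HasDerivAt (yuleG t) (yuleg t v) v := by
  have hE : HasDerivAt (fun w : ℝ => Real.exp (-w)) (-Real.exp (-v)) v := by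
    simpa using ((hasDerivAt_id v).neg.exp)
  have hE2 : HasDerivAt (fun w : ℝ => Real.exp (-2*w)) (-2*Real.exp (-2*v)) v := by
    have h := (((hasDerivAt_id v).const_mul (-2:ℝ))).exp
    simp only [id_eq] at h
    convert h using 1
    ring
  have h1 : HasDerivAt (fun w : ℝ => 2*w*Real.exp (-w))
      (2*Real.exp (-v) + 2*v*(-Real.exp (-v))) v := by
    have h := ((hasDerivAt_id v).const_mul (2:ℝ)).mul hE
    exact h.congr_deriv (by simp)
  have hinner : HasDerivAt (fun w : ℝ => 2*w - 3 + 4*Real.exp (-w) - Real.exp (-2*w))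
      (2 + 4*(-Real.exp (-v)) - (-2*Real.exp (-2*v))) v := by
    have h := ((((hasDerivAt_id v).const_mul (2:ℝ)).sub_const 3).add (hE.const_mul 4)).sub hE2
    exact h.congr_deriv (by simp)
  have hNum := (((hasDerivAt_const v (1:ℝ)).sub h1).sub hE2).add
    (hinner.const_mul (Real.exp (-t)))
  have hDen : HasDerivAt (fun w : ℝ => (1 - Real.exp (-w))^2)
      (2*(1-Real.exp (-v))*Real.exp (-v)) v := by
    have h := ((hasDerivAt_const v (1:ℝ)).sub hE).pow 2
    exact h.congr_deriv (by simp)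
  have hElt1 : Real.exp (-v) < 1 := Real.exp_lt_one_iff.mpr (by linarith)
  have hpos : (0:ℝ) < 1 - Real.exp (-v) := by linarith
  have hden_ne : ((1 - Real.exp (-v))^2) ≠ 0 := by positivity
  have hdiv := hNum.div hDen hden_ne
  have heq : yuleG t = fun w : ℝ =>
      (1 - 2*w*Real.exp (-w) - Real.exp (-2*w) +
        Real.exp (-t) * (2*w - 3 + 4*Real.exp (-w) - Real.exp (-2*w))) /
      ((1 - Real.exp (-w))^2) := rfl
  rw [heq]
  refine hdiv.congr_deriv ?_
  simp only [Pi.add_apply, Pi.sub_apply]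
  have hEtv : Real.exp (-(t-v)) = Real.exp (-t) / Real.exp (-v) := by
    rw [← Real.exp_sub]; congr 1; ring
  have h2v : Real.exp (-2*v) = Real.exp (-v) * Real.exp (-v) := by
    rw [← Real.exp_add]; congr 1; ring
  rw [yuleg, hEtv, h2v]
  have hEne : Real.exp (-v) ≠ 0 := Real.exp_ne_zero _
  have hyne : (1 - Real.exp (-v)) ≠ 0 := ne_of_gt hpos
  field_simp
  ring

lemma yuleg_continuousOn (t : ℝ) : ContinuousOn (yuleg t) (Set.Ioi 0) := by
  have hyne : ∀ v ∈ Set.Ioi (0:ℝ), (1 - Real.exp (-v)) ≠ 0 := by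
    intro v hv
    have h1 : Real.exp (-v) < 1 := Real.exp_lt_one_iff.mpr (by simpa using hv)
    have : (0:ℝ) < 1 - Real.exp (-v) := by linarith
    exact ne_of_gt this
  unfold yuleg
  apply ContinuousOn.mul (Continuous.continuousOn (by fun_prop))
  apply ContinuousOn.add
  · refine ContinuousOn.div (Continuous.continuousOn ?_) (Continuous.continuousOn ?_)
      (fun v hv => pow_ne_zero 2 (hyne v hv)) <;> fun_prop
  · refine ContinuousOn.div (Continuous.continuousOn ?_) (Continuous.continuousOn ?_)
      (fun v hv => pow_ne_zero 3 (hyne v hv)) <;> fun_prop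

lemma exp_neg_bounds {v : ℝ} (h0 : 0 ≤ v) (h1 : v ≤ 1) :
    1 - v + v^2/2 - v^3/6 + v^4/24 - v^5/100 ≤ Real.exp (-v) ∧
    Real.exp (-v) ≤ 1 - v + v^2/2 - v^3/6 + v^4/24 + v^5/100 := by
  have hb := Real.exp_bound (x := -v) (by rw [abs_neg, abs_of_nonneg h0]; exact h1)
    (n := 5) (by norm_num)
  rw [abs_neg, abs_of_nonneg h0] at hb
  simp [Finset.sum_range_succ] at hb
  rw [abs_le] at hb
  obtain ⟨hb1, hb2⟩ := hb
  norm_num [Nat.factorial] at hb1 hb2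
  ring_nf at hb1 hb2
  constructor <;> linarith [hb1, hb2]

set_option maxHeartbeats 2000000 in

lemma yuleG_bounds {t v : ℝ} (h0 : 0 < v) (hv : v ≤ 1/2) (ht : 0 < t) :
    0 ≤ yuleG t v ∧ yuleG t v ≤ 8 * v := by
  have hEpos : 0 < Real.exp (-v) := Real.exp_pos _
  obtain ⟨hlo, hhi⟩ := exp_neg_bounds h0.le (by linarith)
  set E := Real.exp (-v) with hE
  set lo : ℝ := 1 - v + v^2/2 - v^3/6 + v^4/24 - v^5/100 with hloDef
  set hi : ℝ := 1 - v + v^2/2 - v^3/6 + v^4/24 + v^5/100 with hhiDef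
  have h12 : (0:ℝ) ≤ 1 - 2*v := by linarith
  have hv0 : (0:ℝ) ≤ v := h0.le
  have hm1 : (0:ℝ) ≤ v^1 * (1-2*v) := mul_nonneg (pow_nonneg hv0 1) h12
  have hm2 : (0:ℝ) ≤ v^2 * (1-2*v) := mul_nonneg (pow_nonneg hv0 2) h12
  have hm3 : (0:ℝ) ≤ v^3 * (1-2*v) := mul_nonneg (pow_nonneg hv0 3) h12
  have hm4 : (0:ℝ) ≤ v^4 * (1-2*v) := mul_nonneg (pow_nonneg hv0 4) h12
  have hB0 : (0:ℝ) ≤ v^3 * (1-2*v)^7 := mul_nonneg (pow_nonneg hv0 3) (pow_nonneg h12 7)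
  have hB1 : (0:ℝ) ≤ v^4 * (1-2*v)^6 := mul_nonneg (pow_nonneg hv0 4) (pow_nonneg h12 6)
  have hB2 : (0:ℝ) ≤ v^5 * (1-2*v)^5 := mul_nonneg (pow_nonneg hv0 5) (pow_nonneg h12 5)
  have hB3 : (0:ℝ) ≤ v^6 * (1-2*v)^4 := mul_nonneg (pow_nonneg hv0 6) (pow_nonneg h12 4)
  have hB4 : (0:ℝ) ≤ v^7 * (1-2*v)^3 := mul_nonneg (pow_nonneg hv0 7) (pow_nonneg h12 3)
  have hB5 : (0:ℝ) ≤ v^8 * (1-2*v)^2 := mul_nonneg (pow_nonneg hv0 8) (pow_nonneg h12 2)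
  have hB6 : (0:ℝ) ≤ v^9 * (1-2*v)^1 := mul_nonneg (pow_nonneg hv0 9) (pow_nonneg h12 1)
  have hB7 : (0:ℝ) ≤ v^10 * (1-2*v)^0 := mul_nonneg (pow_nonneg hv0 10) (pow_nonneg h12 0)
  have hq1 : 0 ≤ 1 - 2*v*hi - hi^2 := by rw [hhiDef]; linarith [hB0, hB1, hB2, hB3, hB4, hB5, hB6, hB7]
  have hq2 : 1 - 2*v*lo - lo^2 ≤ v^3 := by rw [hloDef]; linarith [hB0, hB1, hB2, hB3, hB4, hB5, hB6, hB7]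
  have hq3 : 0 ≤ 2*v - 3 + 4*lo - hi^2 := by rw [hloDef, hhiDef]; linarith [hB0, hB1, hB2, hB3, hB4, hB5, hB6, hB7]
  have hq4 : 2*v - 3 + 4*hi - lo^2 ≤ v^3 := by rw [hloDef, hhiDef]; linarith [hB0, hB1, hB2, hB3, hB4, hB5, hB6, hB7]
  have hlopos : 0 < lo := by rw [hloDef]; nlinarith [hm1, hm2, hm3, hm4]
  have hhipos : 0 < hi := by rw [hhiDef]; nlinarith [hm1, hm2, hm3, hm4]
  have c1 : 0 ≤ 1 - 2*v*E - E*E := by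
    nlinarith [hq1, mul_nonneg hv0 (sub_nonneg.mpr hhi),
      mul_nonneg (sub_nonneg.mpr hhi) (by linarith : (0:ℝ) ≤ hi + E)]
  have c2 : 1 - 2*v*E - E*E ≤ v^3 := by
    nlinarith [hq2, mul_nonneg hv0 (sub_nonneg.mpr hlo),
      mul_nonneg (sub_nonneg.mpr hlo) (by linarith : (0:ℝ) ≤ E + lo)]
  have c3 : 0 ≤ 2*v - 3 + 4*E - E*E := by
    nlinarith [hq3, sub_nonneg.mpr hlo,
      mul_nonneg (sub_nonneg.mpr hhi) (by linarith : (0:ℝ) ≤ hi + E)]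
  have c4 : 2*v - 3 + 4*E - E*E ≤ v^3 := by
    nlinarith [hq4, sub_nonneg.mpr hhi,
      mul_nonneg (sub_nonneg.mpr hlo) (by linarith : (0:ℝ) ≤ E + lo)]
  have hT0 : 0 < Real.exp (-t) := Real.exp_pos _
  have hT1 : Real.exp (-t) ≤ 1 := Real.exp_le_one_iff.mpr (by linarith)
  have h2v : Real.exp (-2*v) = E * E := by
    rw [hE, ← Real.exp_add]; congr 1; ring
  have hvE : v * E ≤ 1 - E := by
    have h := Real.add_one_le_exp v
    have hx : Real.exp v * E = 1 := by rw [hE, ← Real.exp_add]; simp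
    nlinarith
  have hEhalf : 1/2 ≤ E := by
    have h := Real.add_one_le_exp (-v)
    linarith
  have hden : 0 < (1 - E)^2 := by nlinarith
  have hnum0 : 0 ≤ 1 - 2*v*E - E*E + Real.exp (-t) * (2*v - 3 + 4*E - E*E) := by
    nlinarith [mul_nonneg hT0.le c3]
  have hden4 : v^2/4 ≤ (1 - E)^2 := by
    have hA : (0:ℝ) ≤ (1 - E) - v/2 := by nlinarith [mul_nonneg hv0 (by linarith : (0:ℝ) ≤ E - 1/2)]
    have hB : (0:ℝ) ≤ (1 - E) + v/2 := by nlinarith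
    nlinarith [mul_nonneg hA hB]
  constructor
  · rw [yuleG, h2v, ← hE]
    exact div_nonneg hnum0 hden.le
  · rw [yuleG, h2v, ← hE, div_le_iff₀ hden]
    have hnum2 : 1 - 2*v*E - E*E + Real.exp (-t) * (2*v - 3 + 4*E - E*E) ≤ 2*v^3 := by
      nlinarith [mul_nonneg (by linarith : (0:ℝ) ≤ 1 - Real.exp (-t)) c3]
    have h8 : 2*v^3 ≤ 8*v*(1-E)^2 := by
      nlinarith [mul_le_mul_of_nonneg_left hden4 (by linarith : (0:ℝ) ≤ 8*v)]
    linarith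

lemma yuleG_tendsto (t : ℝ) (ht : 0 < t) :
    Tendsto (yuleG t) (nhdsWithin 0 (Set.Ioi 0)) (nhds 0) := by
  have hmem : Set.Ioc (0:ℝ) (1/2) ∈ nhdsWithin (0:ℝ) (Set.Ioi 0) :=
    Ioc_mem_nhdsGT_of_mem (Set.mem_Ico.mpr ⟨le_rfl, by norm_num⟩)
  apply squeeze_zero' (g := fun v => 8*v)
  · filter_upwards [hmem] with v hv
    exact (yuleG_bounds hv.1 hv.2 ht).1
  · filter_upwards [hmem] with v hv
    exact (yuleG_bounds hv.1 hv.2 ht).2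
  · have h : Tendsto (fun v : ℝ => 8*v) (nhds (0:ℝ)) (nhds (8*0)) :=
      (continuous_const.mul continuous_id).tendsto 0
    have h2 : Tendsto (fun v : ℝ => 8*v) (nhdsWithin 0 (Set.Ioi 0)) (nhds (8*0)) :=
      h.mono_left (nhdsWithin_le_nhds (s := Set.Ioi 0))
    simpa using h2

lemma yuleg_measurable (t : ℝ) : Measurable (yuleg t) := by
  unfold yuleg
  fun_prop

lemma yule_lintegral (t u : ℝ) (ht : 0 < t) (hu0 : 0 < u) (hut : u < t) :
    ∫⁻ v in Set.Ioc 0 u, ENNReal.ofReal (yuleg t v) = ENNReal.ofReal (yuleG t u) := by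
  set ν := (volume : Measure ℝ).withDensity (fun v => ENNReal.ofReal (yuleg t v)) with hν
  have hνapp : ∀ s : Set ℝ, MeasurableSet s →
      ν s = ∫⁻ v in s, ENNReal.ofReal (yuleg t v) := by
    intro s hs
    rw [hν, withDensity_apply _ hs]
  set Aseq : ℕ → Set ℝ := fun n => Set.Ioc (u/(n+1)) u with hAseq
  have hmono : Monotone Aseq := by
    intro n m hnm
    apply Set.Ioc_subset_Ioc_left
    apply div_le_div_of_nonneg_left hu0.le (by positivity)
    push_cast; linarith [(Nat.cast_le (α := ℝ)).mpr hnm]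
  have hunion : (⋃ n, Aseq n) = Set.Ioc 0 u := by
    ext x
    simp only [Set.mem_iUnion, Set.mem_Ioc, hAseq]
    constructor
    · rintro ⟨n, hn, hx⟩
      exact ⟨lt_trans (by positivity) hn, hx⟩
    · rintro ⟨hx0, hxu⟩
      obtain ⟨n, hn⟩ := exists_nat_gt (u/x)
      refine ⟨n, ?_, hxu⟩
      rw [div_lt_iff₀ (by positivity)]
      rw [div_lt_iff₀ hx0] at hn
      nlinarith
  have hA : ∀ n : ℕ, ν (Aseq n) = ENNReal.ofReal (yuleG t u - yuleG t (u/(n+1))) := by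
    intro n
    set ε : ℝ := u/(n+1) with hε
    have hε0 : 0 < ε := by positivity
    have hεu : ε ≤ u := by
      rw [hε, div_le_iff₀ (by positivity)]
      nlinarith [Nat.cast_nonneg (α := ℝ) n]
    have hIcc : Set.Icc ε u ⊆ Set.Ioi 0 := fun x hx => lt_of_lt_of_le hε0 hx.1
    have hcont : ContinuousOn (yuleg t) (Set.Icc ε u) := (yuleg_continuousOn t).mono hIcc
    have hint : IntegrableOn (yuleg t) (Set.Icc ε u) := hcont.integrableOn_Icc
    have hintIoc : IntegrableOn (yuleg t) (Set.Ioc ε u) := hint.mono_set Set.Ioc_subset_Icc_self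
    have hnn : 0 ≤ᵐ[(volume : Measure ℝ).restrict (Set.Ioc ε u)] yuleg t := by
      exact (ae_restrict_iff' measurableSet_Ioc).mpr
        (ae_of_all _ fun v hv => yuleg_nonneg t (lt_of_lt_of_le hε0 hv.1.le)
          (lt_of_le_of_lt hv.2 hut))
    rw [hνapp _ measurableSet_Ioc, ← ofReal_integral_eq_lintegral_ofReal hintIoc hnn]
    congr 1
    rw [← intervalIntegral.integral_of_le hεu]
    apply intervalIntegral.integral_eq_sub_of_hasDerivAt
    · intro x hx
      rw [Set.uIcc_of_le hεu] at hx
      exact yuleG_hasDerivAt t (lt_of_lt_of_le hε0 hx.1) (lt_of_le_of_lt hx.2 hut)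
    · rw [intervalIntegrable_iff_integrableOn_Ioc_of_le hεu]
      exact hintIoc
  have htend := tendsto_measure_iUnion_atTop (μ := ν) hmono
  rw [hunion] at htend
  have hseq : Tendsto (fun n : ℕ => u/((n:ℝ)+1)) atTop (nhdsWithin 0 (Set.Ioi 0)) := by
    rw [tendsto_nhdsWithin_iff]
    constructor
    · have h := (tendsto_const_div_atTop_nhds_zero_nat u).comp (tendsto_add_atTop_nat 1)
      have heq : (fun n : ℕ => u/((n:ℝ)+1)) = (fun n : ℕ => u / (n:ℝ)) ∘ (fun n => n + 1) := by
        funext n; simp [Function.comp]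
      rw [heq]; exact h
    · exact Eventually.of_forall fun n => Set.mem_Ioi.mpr (by positivity)
  have hGlim : Tendsto (fun n : ℕ => yuleG t (u/((n:ℝ)+1))) atTop (nhds 0) :=
    (yuleG_tendsto t ht).comp hseq
  have hlim2 : Tendsto (fun n : ℕ => ENNReal.ofReal (yuleG t u - yuleG t (u/((n:ℝ)+1))))
      atTop (nhds (ENNReal.ofReal (yuleG t u))) := by
    have h1 : Tendsto (fun n : ℕ => yuleG t u - yuleG t (u/((n:ℝ)+1))) atTop
        (nhds (yuleG t u - 0)) := tendsto_const_nhds.sub hGlim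
    rw [sub_zero] at h1
    exact (ENNReal.continuous_ofReal.tendsto _).comp h1
  have htend2 : Tendsto (fun n => ν (Aseq n)) atTop (nhds (ENNReal.ofReal (yuleG t u))) := by
    have : (fun n => ν (Aseq n)) = fun n : ℕ => ENNReal.ofReal (yuleG t u - yuleG t (u/((n:ℝ)+1))) :=
      funext fun n => hA n
    rw [this]
    exact hlim2
  have := tendsto_nhds_unique htend htend2
  rw [← hνapp _ measurableSet_Ioc, this]

/-- For a rate-1 Yule process `Y` started from one individual, with
`P(Y_t ≥ 2) = 1 - e^{-t}`, sample two distinct individuals uniformly at random at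
time `t ≥ 0` and let `s` be the death (splitting) time of their most recent common
ancestor, `I` the population size just after it; the joint law is given by the
density `yuleJointDensity`.  Then, conditionally on `{Y_t ≥ 2}`, the distribution
function of `s` satisfies, for `0 < u < t`:
`Q_0^{(t)}(s ≤ u) = [1 - 2u e^{-u} - e^{-2u} + e^{-t}(2u - 3 + 4e^{-u} - e^{-2u})]
                  / [(1 - e^{-t})(1 - e^{-u})²]`. -/
theorem yule_mrca_distribution {Ω : Type*} [MeasurableSpace Ω]
    (μ : Measure Ω) [IsProbabilityMeasure μ]
    (t : ℝ) (ht : 0 < t)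
    (s : Ω → ℝ) (I Y : Ω → ℕ)
    (hs : Measurable s) (hI : Measurable I) (hY : Measurable Y)
    (hrange : ∀ ω, 2 ≤ Y ω → 2 ≤ I ω ∧ I ω ≤ Y ω ∧ 0 < s ω ∧ s ω < t)
    (hYdist : μ {ω | 2 ≤ Y ω} = ENNReal.ofReal (1 - Real.exp (-t)))
    (hjoint : ∀ u : ℝ, 0 < u → u < t → ∀ i j : ℕ, 2 ≤ i → i ≤ j →
      μ {ω | s ω ≤ u ∧ I ω = i ∧ Y ω = j} =
        ENNReal.ofReal (∫ v in Set.Ioc (0 : ℝ) u, yuleJointDensity t i j v))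
    (u : ℝ) (hu0 : 0 < u) (hut : u < t) :
    (μ[|{ω | 2 ≤ Y ω}]) {ω | s ω ≤ u} =
      ENNReal.ofReal
        ((1 - 2 * u * Real.exp (-u) - Real.exp (-2 * u) +
            Real.exp (-t) * (2 * u - 3 + 4 * Real.exp (-u) - Real.exp (-2 * u))) /
          ((1 - Real.exp (-t)) * (1 - Real.exp (-u)) ^ 2)) := by
  have hAm : MeasurableSet {ω | 2 ≤ Y ω} := by
    have : {ω | 2 ≤ Y ω} = Y ⁻¹' (Set.Ici 2) := rfl
    rw [this]
    exact hY measurableSet_Ici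
  set S : ℕ × ℕ → Set Ω := fun p =>
    {ω | (2 ≤ p.1 ∧ p.1 ≤ p.2) ∧ s ω ≤ u ∧ I ω = p.1 ∧ Y ω = p.2} with hSdef
  have hSm : ∀ p, MeasurableSet (S p) := by
    intro p
    by_cases h : 2 ≤ p.1 ∧ p.1 ≤ p.2
    · have : S p = (s ⁻¹' Set.Iic u) ∩ ((I ⁻¹' {p.1}) ∩ (Y ⁻¹' {p.2})) := by
        ext ω; simp [hSdef, h]; try tauto
      rw [this]
      exact (hs measurableSet_Iic).inter ((hI (measurableSet_singleton _)).inter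
        (hY (measurableSet_singleton _)))
    · have : S p = ∅ := by
        ext ω; simp [hSdef]; tauto
      rw [this]; exact MeasurableSet.empty
  have hdisj : Pairwise (Function.onFun Disjoint S) := by
    intro p q hpq
    rw [Function.onFun, Set.disjoint_left]
    rintro ω ⟨_, _, hIp, hYp⟩ ⟨_, _, hIq, hYq⟩
    exact hpq (Prod.ext (hIp ▸ hIq.symm ▸ rfl) (hYp ▸ hYq.symm ▸ rfl))
  have hunion : {ω | 2 ≤ Y ω} ∩ {ω | s ω ≤ u} = ⋃ p, S p := by
    ext ω
    simp only [Set.mem_inter_iff, Set.mem_setOf_eq, Set.mem_iUnion, hSdef]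
    constructor
    · rintro ⟨h2Y, hsu⟩
      obtain ⟨h1, h2, _, _⟩ := hrange ω h2Y
      exact ⟨(I ω, Y ω), ⟨h1, h2⟩, hsu, rfl, rfl⟩
    · rintro ⟨p, ⟨⟨h2, hle⟩, hsu, hIp, hYp⟩⟩
      exact ⟨by omega, hsu⟩
  have hterm : ∀ p : ℕ × ℕ, μ (S p) =
      ∫⁻ v in Set.Ioc (0:ℝ) u, ENNReal.ofReal
        (if 2 ≤ p.1 ∧ p.1 ≤ p.2 then yuleJointDensity t p.1 p.2 v else 0) := by
    intro p
    by_cases h : 2 ≤ p.1 ∧ p.1 ≤ p.2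
    · have hSp : S p = {ω | s ω ≤ u ∧ I ω = p.1 ∧ Y ω = p.2} := by
        ext ω; simp [hSdef, h]
      rw [hSp, hjoint u hu0 hut p.1 p.2 h.1 h.2]
      have hint : IntegrableOn (yuleJointDensity t p.1 p.2) (Set.Ioc (0:ℝ) u) :=
        (yule_density_continuous t p.1 p.2).integrableOn_Ioc
      have hnn : 0 ≤ᵐ[(volume : Measure ℝ).restrict (Set.Ioc (0:ℝ) u)]
          yuleJointDensity t p.1 p.2 :=
        (ae_restrict_iff' measurableSet_Ioc).mpr
          (ae_of_all _ fun v hv => yule_density_nonneg t p.1 p.2 hv.1.le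
            (le_trans hv.2 hut.le))
      rw [ofReal_integral_eq_lintegral_ofReal hint hnn]
      apply lintegral_congr
      intro v
      rw [if_pos h]
    · have hSp : S p = ∅ := by ext ω; simp [hSdef]; tauto
      rw [hSp]
      simp only [if_neg h]
      simp
  have hmeas : ∀ p : ℕ × ℕ, AEMeasurable
      (fun v : ℝ => ENNReal.ofReal
        (if 2 ≤ p.1 ∧ p.1 ≤ p.2 then yuleJointDensity t p.1 p.2 v else 0))
      ((volume : Measure ℝ).restrict (Set.Ioc (0:ℝ) u)) := by
    intro p
    by_cases h : 2 ≤ p.1 ∧ p.1 ≤ p.2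
    · simp only [if_pos h]
      exact ((yule_density_continuous t p.1 p.2).measurable.ennreal_ofReal).aemeasurable
    · simp only [if_neg h]
      exact aemeasurable_const
  have hkey : μ ({ω | 2 ≤ Y ω} ∩ {ω | s ω ≤ u}) = ENNReal.ofReal (yuleG t u) := by
    rw [hunion, measure_iUnion hdisj hSm]
    calc ∑' p, μ (S p)
        = ∑' p : ℕ × ℕ, ∫⁻ v in Set.Ioc (0:ℝ) u, ENNReal.ofReal
            (if 2 ≤ p.1 ∧ p.1 ≤ p.2 then yuleJointDensity t p.1 p.2 v else 0) :=
          tsum_congr hterm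
      _ = ∫⁻ v in Set.Ioc (0:ℝ) u, ∑' p : ℕ × ℕ, ENNReal.ofReal
            (if 2 ≤ p.1 ∧ p.1 ≤ p.2 then yuleJointDensity t p.1 p.2 v else 0) :=
          (lintegral_tsum hmeas).symm
      _ = ∫⁻ v in Set.Ioc (0:ℝ) u, ENNReal.ofReal (yuleg t v) := by
          apply setLIntegral_congr_fun measurableSet_Ioc
          intro v hv
          have hv0 : 0 < v := hv.1
          have hvt : v < t := lt_of_le_of_lt hv.2 hut
          have hsum := yule_prod_hasSum t hv0 hvt
          dsimp only
          rw [← hsum.tsum_eq, ← ENNReal.ofReal_tsum_of_nonneg ?_ hsum.summable]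
          · intro p
            split
            · exact yule_density_nonneg t _ _ hv0.le hvt.le
            · exact le_refl 0
      _ = ENNReal.ofReal (yuleG t u) := yule_lintegral t u ht hu0 hut
  rw [ProbabilityTheory.cond_apply hAm μ {ω | s ω ≤ u}, hkey, hYdist]
  have h1t : 0 < 1 - Real.exp (-t) := by
    have : Real.exp (-t) < 1 := Real.exp_lt_one_iff.mpr (by linarith)
    linarith
  have h1u : 0 < 1 - Real.exp (-u) := by
    have : Real.exp (-u) < 1 := Real.exp_lt_one_iff.mpr (by linarith)
    linarith
  rw [← ENNReal.ofReal_inv_of_pos h1t, ← ENNReal.ofReal_mul (by positivity)]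
  congr 1
  rw [yuleG]
  field_simp
end

section
/- For 0 < u < t, the series identity holds: Σ_{i=2}^{∞} e^{-u} · 2(2e^{-(t-u)} + i - 1)(1 - e^{-u})^{i-2} / ((1 - e^{-t}) i (i+1)) = 2 [e^{-u}(u - 2 + (u+2)e^{-u}) + e^{-t}(1 - 2u e^{-u} - e^{-2u})] / [(1 - e^{-t})(1 - e^{-u})^3]. -/
open Real

/-- For real `0 < u < t` the series identity holds (index `i = n + 2`
runs over the integers `i ≥ 2`):
`Σ_{i≥2} e^{-u} · 2(2e^{-(t-u)} + i - 1)(1 - e^{-u})^{i-2} / ((1 - e^{-t}) i (i+1))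
 = 2[e^{-u}(u - 2 + (u+2)e^{-u}) + e^{-t}(1 - 2u e^{-u} - e^{-2u})]
   / [(1 - e^{-t})(1 - e^{-u})³]`. -/
theorem yule_density_series (u t : ℝ) (hu : 0 < u) (hut : u < t) :
    ∑' n : ℕ,
        Real.exp (-u) * (2 * (2 * Real.exp (-(t - u)) + ((n : ℝ) + 2) - 1) *
          (1 - Real.exp (-u)) ^ n) /
          ((1 - Real.exp (-t)) * ((n : ℝ) + 2) * ((n : ℝ) + 3)) =
      2 * (Real.exp (-u) * (u - 2 + (u + 2) * Real.exp (-u)) +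
          Real.exp (-t) * (1 - 2 * u * Real.exp (-u) - Real.exp (-2 * u))) /
        ((1 - Real.exp (-t)) * (1 - Real.exp (-u)) ^ 3) := by
  have hea : Real.exp (-u) < 1 := Real.exp_lt_one_iff.mpr (by linarith)
  have het : Real.exp (-t) < 1 := Real.exp_lt_one_iff.mpr (by linarith)
  set x : ℝ := 1 - Real.exp (-u) with hxdef
  have hxpos : 0 < x := by simp [hxdef]; linarith
  have hxlt : x < 1 := by
    have := Real.exp_pos (-u); simp [hxdef]; linarith
  have hx1 : |x| < 1 := by rw [abs_of_pos hxpos]; exact hxlt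
  have hone : (1 : ℝ) - x = Real.exp (-u) := by rw [hxdef]; ring
  have h1 : HasSum (fun n : ℕ => x ^ (n + 1) / (n + 1)) u := by
    have := hasSum_pow_div_log_of_abs_lt_one hx1
    rwa [hone, Real.log_exp, neg_neg] at this
  have h2 : HasSum (fun n : ℕ => x ^ (n + 2) / (n + 2)) (u - x) := by
    have := (hasSum_nat_add_iff' (f := fun n : ℕ => x ^ (n + 1) / (n + 1)) 1).mpr h1
    simp only [Finset.range_one, Finset.sum_singleton] at this
    convert this using 2 with n
    · rfl
    · push_cast; ring_nf
    · push_cast; ring_nf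
  have h3 : HasSum (fun n : ℕ => x ^ (n + 3) / (n + 3)) (u - x - x ^ 2 / 2) := by
    have := (hasSum_nat_add_iff' (f := fun n : ℕ => x ^ (n + 2) / (n + 2)) 1).mpr h2
    simp only [Finset.range_one, Finset.sum_singleton] at this
    convert this using 2 with n
    · rfl
    · push_cast; ring_nf
    · push_cast; ring_nf
  set E : ℝ := Real.exp (-(t - u)) with hEdef
  have hEa : E * Real.exp (-u) = Real.exp (-t) := by
    rw [hEdef, ← Real.exp_add]; ring_nf
  have h2u : Real.exp (-2 * u) = Real.exp (-u) * Real.exp (-u) := by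
    rw [← Real.exp_add]; ring_nf
  set K : ℝ := 2 * Real.exp (-u) / (1 - Real.exp (-t)) with hKdef
  set A : ℝ := K * (2 * E - 1) / x ^ 2 with hAdef
  set B : ℝ := K * (2 - 2 * E) / x ^ 3 with hBdef
  have hx0 : x ≠ 0 := ne_of_gt hxpos
  have het0 : (1 : ℝ) - Real.exp (-t) ≠ 0 := by linarith
  have hsum : HasSum
      (fun n : ℕ =>
        Real.exp (-u) * (2 * (2 * E + ((n : ℝ) + 2) - 1) * x ^ n) /
          ((1 - Real.exp (-t)) * ((n : ℝ) + 2) * ((n : ℝ) + 3)))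
      (A * (u - x) + B * (u - x - x ^ 2 / 2)) := by
    have := (h2.mul_left A).add (h3.mul_left B)
    refine this.congr_fun ?_
    intro n
    have hn2 : ((n : ℝ) + 2) ≠ 0 := by positivity
    have hn3 : ((n : ℝ) + 3) ≠ 0 := by positivity
    rw [hAdef, hBdef, hKdef]
    field_simp
    ring
  rw [hsum.tsum_eq, hAdef, hBdef, hKdef, h2u, ← hEa]
  clear_value x E
  have ha : Real.exp (-u) = 1 - x := by linarith
  rw [← hEa] at het0
  rw [ha] at het0 ⊢
  field_simp
  ring
end

section
/- Let w be a C² function on ℝ² with 0 < w ≤ 1 satisfying (1/2)Δw = V(w² - w) where V ≥ 0 is bounded and not identically zero on the region where w < 1. If w < 1 everywhere, then w is a nonconstant bounded superharmonic function on ℝ², contradicting recurrence of two-dimensional Brownian motion; hence w ≡ 1. -/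
open Real

/-- The Laplacian `Δw = Σ_i ∂²w/∂x_i²` on `ℝ²`. -/
noncomputable def laplacian2 (w : (Fin 2 → ℝ) → ℝ) (x : Fin 2 → ℝ) : ℝ :=
  ∑ i : Fin 2, fderiv ℝ (fun y => fderiv ℝ w y (Pi.single i 1)) x (Pi.single i 1)

theorem aux_secondDeriv_nonneg {g G : ℝ → ℝ} {L : ℝ}
    (hg : ∀ᶠ t in nhds (0:ℝ), HasDerivAt g (G t) t)
    (hG : HasDerivAt G L 0) (hmin : IsLocalMin g 0) : 0 ≤ L := by
  by_contra hL
  push_neg at hL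
  have hg0 : HasDerivAt g (G 0) 0 := hg.self_of_nhds
  have hG0 : G 0 = 0 := by
    have := hmin.deriv_eq_zero
    rwa [hg0.deriv] at this
  -- slope of G tends to L < 0
  have hslope := hasDerivAt_iff_tendsto_slope.mp hG
  have hneg : ∀ᶠ t in nhdsWithin (0:ℝ) {(0:ℝ)}ᶜ, slope G 0 t < 0 :=
    hslope.eventually_lt_const hL
  have hneg' : ∀ᶠ t in nhds (0:ℝ), t ≠ 0 → slope G 0 t < 0 := by
    rwa [eventually_nhdsWithin_iff] at hneg
  -- gather eventualities into a metric ball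
  have hall : ∀ᶠ t in nhds (0:ℝ),
      HasDerivAt g (G t) t ∧ g 0 ≤ g t ∧ (t ≠ 0 → slope G 0 t < 0) :=
    hg.and (hmin.and hneg')
  obtain ⟨δ, hδ, hball⟩ := Metric.eventually_nhds_iff.mp hall
  set η := δ/2 with hη
  have hηpos : 0 < η := by positivity
  have hmem : ∀ t ∈ Set.Icc (0:ℝ) η, dist t (0:ℝ) < δ := by
    intro t ht
    rw [Real.dist_eq, sub_zero, abs_of_nonneg ht.1]
    linarith [ht.2]
  -- g strictly decreasing on [0, η]
  have hanti : StrictAntiOn g (Set.Icc 0 η) := by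
    apply strictAntiOn_of_deriv_neg (convex_Icc 0 η)
    · intro t ht
      exact ((hball (hmem t ht)).1).continuousAt.continuousWithinAt
    · intro t ht
      rw [interior_Icc] at ht
      have h1 := hball (hmem t ⟨le_of_lt ht.1, le_of_lt ht.2⟩)
      rw [h1.1.deriv]
      have hs := h1.2.2 (ne_of_gt ht.1)
      rw [slope_def_field, hG0, sub_zero, sub_zero] at hs
      rcases div_neg_iff.mp hs with h | h
      · linarith [ht.1]
      · exact h.1
  have : g η < g 0 := hanti (Set.left_mem_Icc.mpr hηpos.le) (Set.right_mem_Icc.mpr hηpos.le) hηpos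
  have h2 := (hball (hmem η (Set.right_mem_Icc.mpr hηpos.le))).2.1
  linarith

theorem aux_laplacian_nonneg {u : (Fin 2 → ℝ) → ℝ} {p : Fin 2 → ℝ}
    (hdiff : ∀ᶠ y in nhds p, DifferentiableAt ℝ u y)
    (hdiff2 : ∀ i : Fin 2, DifferentiableAt ℝ (fun y => fderiv ℝ u y (Pi.single i 1)) p)
    (hmin : IsLocalMin u p) : 0 ≤ laplacian2 u p := by
  apply Finset.sum_nonneg
  intro i _
  set e : Fin 2 → ℝ := Pi.single i 1 with he
  set ℓ : ℝ → (Fin 2 → ℝ) := fun t => p + t • e with hℓ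
  have hℓ0 : ℓ 0 = p := by simp [hℓ]
  have hℓcont : ContinuousAt ℓ 0 := by fun_prop
  have hℓderiv : ∀ t : ℝ, HasDerivAt ℓ e t := by
    intro t
    have h := ((hasDerivAt_id t).smul_const e).const_add p
    rw [one_smul] at h
    exact h
  have hg : ∀ᶠ t in nhds (0:ℝ), HasDerivAt (u ∘ ℓ) (fderiv ℝ u (ℓ t) e) t := by
    have hev : ∀ᶠ t in nhds (0:ℝ), DifferentiableAt ℝ u (ℓ t) := by
      have := hℓcont.tendsto
      rw [hℓ0] at this
      exact this.eventually hdiff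
    filter_upwards [hev] with t ht
    exact ht.hasFDerivAt.comp_hasDerivAt t (hℓderiv t)
  have hG : HasDerivAt (fun t => fderiv ℝ u (ℓ t) e)
      (fderiv ℝ (fun y => fderiv ℝ u y e) p e) 0 := by
    have h1 : HasFDerivAt (fun y => fderiv ℝ u y e)
        (fderiv ℝ (fun y => fderiv ℝ u y e) p) (ℓ 0) := by
      rw [hℓ0]; exact (hdiff2 i).hasFDerivAt
    exact h1.comp_hasDerivAt 0 (hℓderiv 0)
  have hmin' : IsLocalMin (u ∘ ℓ) 0 := by
    apply IsLocalMin.comp_continuous _ hℓcont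
    rw [hℓ0]; exact hmin
  exact aux_secondDeriv_nonneg hg hG hmin'

/-- `auxQ c y = ∑ j (y j - c j)^2`. -/
def auxQ (c y : Fin 2 → ℝ) : ℝ := ∑ j : Fin 2, (y j - c j) ^ 2

noncomputable def projCLM (j : Fin 2) : ((Fin 2 → ℝ)) →L[ℝ] ℝ := ContinuousLinearMap.proj j

theorem projCLM_hasFDerivAt (j : Fin 2) (x : Fin 2 → ℝ) :
    HasFDerivAt (fun y : Fin 2 → ℝ => y j) (projCLM j) x :=
  (projCLM j).hasFDerivAt

noncomputable def auxDQ (c x : Fin 2 → ℝ) : (Fin 2 → ℝ) →L[ℝ] ℝ :=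
  ∑ j : Fin 2, (2 * (x j - c j)) • projCLM j

theorem auxQ_cont (c : Fin 2 → ℝ) : Continuous (auxQ c) := by
  unfold auxQ; fun_prop

theorem auxQ_nonneg (c y : Fin 2 → ℝ) : 0 ≤ auxQ c y :=
  Finset.sum_nonneg fun j _ => sq_nonneg _

theorem hasFDerivAt_auxQ (c x : Fin 2 → ℝ) : HasFDerivAt (auxQ c) (auxDQ c x) x := by
  unfold auxQ auxDQ
  apply HasFDerivAt.fun_sum
  intro j _
  have hb : HasFDerivAt (fun y : Fin 2 → ℝ => y j - c j) (projCLM j) x :=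
    (projCLM_hasFDerivAt j x).sub_const (c j)
  have := hb.fun_mul hb
  have h2 : (fun y : Fin 2 → ℝ => (y j - c j) * (y j - c j)) = fun y => (y j - c j) ^ 2 := by
    funext y; ring
  rw [h2] at this
  refine this.congr_fderiv ?_
  ext v
  simp [ContinuousLinearMap.smul_apply, projCLM]
  ring

theorem auxDQ_apply (c x : Fin 2 → ℝ) (i : Fin 2) :
    auxDQ c x (Pi.single i 1) = 2 * (x i - c i) := by
  unfold auxDQ
  rw [ContinuousLinearMap.sum_apply]
  rw [Finset.sum_eq_single i]
  · simp [projCLM]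
  · intro j _ hji
    simp [projCLM, Pi.single_eq_of_ne hji]
  · simp

theorem fderiv_auxQ_apply (c x : Fin 2 → ℝ) (i : Fin 2) :
    fderiv ℝ (auxQ c) x (Pi.single i 1) = 2 * (x i - c i) := by
  rw [(hasFDerivAt_auxQ c x).fderiv, auxDQ_apply]

theorem laplacian2_auxQ (c x : Fin 2 → ℝ) : laplacian2 (auxQ c) x = 4 := by
  unfold laplacian2
  have h : ∀ i : Fin 2,
      fderiv ℝ (fun y => fderiv ℝ (auxQ c) y (Pi.single i 1)) x (Pi.single i 1) = 2 := by
    intro i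
    have heq : (fun y => fderiv ℝ (auxQ c) y (Pi.single i 1)) = fun y => 2 * (y i - c i) := by
      funext y; exact fderiv_auxQ_apply c y i
    rw [heq]
    have hd : HasFDerivAt (fun y : Fin 2 → ℝ => 2 * (y i - c i))
        ((2:ℝ) • projCLM i) x :=
      ((projCLM_hasFDerivAt i x).sub_const (c i)).const_mul 2
    rw [hd.fderiv]
    simp [projCLM]
  rw [Fin.sum_univ_two, h 0, h 1]
  norm_num

theorem hasFDerivAt_logQ (c x : Fin 2 → ℝ) (hx : auxQ c x ≠ 0) :
    HasFDerivAt (fun y => Real.log (auxQ c y)) ((auxQ c x)⁻¹ • auxDQ c x) x := by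
  have h := (Real.hasDerivAt_log hx).comp_hasFDerivAt x (hasFDerivAt_auxQ c x)
  exact h

theorem fderiv_logQ_apply (c x : Fin 2 → ℝ) (i : Fin 2) (hx : auxQ c x ≠ 0) :
    fderiv ℝ (fun y => Real.log (auxQ c y)) x (Pi.single i 1)
      = (auxQ c x)⁻¹ * (2 * (x i - c i)) := by
  rw [(hasFDerivAt_logQ c x hx).fderiv]
  simp [auxDQ_apply]

theorem laplacian2_logQ (c x : Fin 2 → ℝ) (hx : auxQ c x ≠ 0) :
    laplacian2 (fun y => Real.log (auxQ c y)) x = 0 := by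
  have hopen : IsOpen {y : Fin 2 → ℝ | auxQ c y ≠ 0} :=
    isOpen_ne.preimage (auxQ_cont c)
  have hmem : x ∈ {y : Fin 2 → ℝ | auxQ c y ≠ 0} := hx
  have hnhds : {y : Fin 2 → ℝ | auxQ c y ≠ 0} ∈ nhds x := hopen.mem_nhds hmem
  unfold laplacian2
  have key : ∀ i : Fin 2,
      fderiv ℝ (fun y => fderiv ℝ (fun z => Real.log (auxQ c z)) y (Pi.single i 1)) x
        (Pi.single i 1)
      = (auxQ c x)⁻¹ * 2
        - ((auxQ c x) ^ 2)⁻¹ * (2 * (x i - c i)) * (2 * (x i - c i)) := by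
    intro i
    have hev : (fun y => fderiv ℝ (fun z => Real.log (auxQ c z)) y (Pi.single i 1))
        =ᶠ[nhds x] fun y => (auxQ c y)⁻¹ * (2 * (y i - c i)) := by
      filter_upwards [hnhds] with y hy
      exact fderiv_logQ_apply c y i hy
    rw [hev.fderiv_eq]
    -- derivative of the explicit formula
    have hA : HasFDerivAt (fun y => (auxQ c y)⁻¹)
        (-((auxQ c x ^ 2)⁻¹ • auxDQ c x)) x := by
      have h := (hasDerivAt_inv hx).comp_hasFDerivAt x (hasFDerivAt_auxQ c x)
      simpa [Function.comp_def] using h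
    have hB : HasFDerivAt (fun y : Fin 2 → ℝ => 2 * (y i - c i))
        ((2:ℝ) • projCLM i) x :=
      ((projCLM_hasFDerivAt i x).sub_const (c i)).const_mul 2
    have hAB := hA.fun_mul hB
    rw [hAB.fderiv]
    simp [ContinuousLinearMap.smul_apply, auxDQ_apply, projCLM]
    try ring
  rw [Fin.sum_univ_two, key 0, key 1]
  have hQ : auxQ c x = (x 0 - c 0) ^ 2 + (x 1 - c 1) ^ 2 := by
    unfold auxQ; rw [Fin.sum_univ_two]
  field_simp
  nlinarith [sq_nonneg (x 0 - c 0), sq_nonneg (x 1 - c 1), hQ]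
-- helper: laplacian of u - ε·q
theorem aux_pert {u : (Fin 2 → ℝ) → ℝ} {p : Fin 2 → ℝ} (ε : ℝ)
    (hdiff : ∀ᶠ y in nhds p, DifferentiableAt ℝ u y)
    (hdiff2 : ∀ i : Fin 2, DifferentiableAt ℝ (fun y => fderiv ℝ u y (Pi.single i 1)) p) :
    (∀ᶠ y in nhds p, DifferentiableAt ℝ (fun z => u z - ε * auxQ 0 z) y) ∧
    (∀ i : Fin 2, DifferentiableAt ℝ
      (fun y => fderiv ℝ (fun z => u z - ε * auxQ 0 z) y (Pi.single i 1)) p) ∧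
    laplacian2 (fun z => u z - ε * auxQ 0 z) p = laplacian2 u p - 4 * ε := by
  have hqd : ∀ y : Fin 2 → ℝ, HasFDerivAt (fun z => ε * auxQ 0 z) (ε • auxDQ 0 y) y :=
    fun y => (hasFDerivAt_auxQ 0 y).const_mul ε
  have hveq : ∀ y : Fin 2 → ℝ, DifferentiableAt ℝ u y → ∀ i : Fin 2,
      fderiv ℝ (fun z => u z - ε * auxQ 0 z) y (Pi.single i 1)
        = fderiv ℝ u y (Pi.single i 1) - ε * (2 * y i) := by
    intro y hy i
    have h1 : HasFDerivAt (fun z => u z - ε * auxQ 0 z)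
        (fderiv ℝ u y - ε • auxDQ 0 y) y := hy.hasFDerivAt.sub (hqd y)
    rw [h1.fderiv]
    simp [auxDQ_apply]
  have hev : ∀ i : Fin 2,
      (fun y => fderiv ℝ (fun z => u z - ε * auxQ 0 z) y (Pi.single i 1))
        =ᶠ[nhds p] (fun y => fderiv ℝ u y (Pi.single i 1) - ε * (2 * y i)) := by
    intro i
    filter_upwards [hdiff] with y hy
    exact hveq y hy i
  have hlin : ∀ i : Fin 2, ∀ y : Fin 2 → ℝ,
      HasFDerivAt (fun z : Fin 2 → ℝ => ε * (2 * z i)) ((ε * 2) • projCLM i) y := by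
    intro i y
    have h := (projCLM_hasFDerivAt i y).const_mul (ε * 2)
    have h2 : (fun z : Fin 2 → ℝ => ε * 2 * z i) = fun z : Fin 2 → ℝ => ε * (2 * z i) := by
      funext z; ring
    rwa [h2] at h
  have hd2 : ∀ i : Fin 2, DifferentiableAt ℝ
      (fun y => fderiv ℝ (fun z => u z - ε * auxQ 0 z) y (Pi.single i 1)) p := by
    intro i
    rw [(hev i).differentiableAt_iff]
    exact (hdiff2 i).sub (hlin i p).differentiableAt
  refine ⟨?_, hd2, ?_⟩
  · filter_upwards [hdiff] with y hy
    exact hy.sub (hqd y).differentiableAt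
  · unfold laplacian2
    have term : ∀ i : Fin 2,
        fderiv ℝ (fun y => fderiv ℝ (fun z => u z - ε * auxQ 0 z) y (Pi.single i 1)) p
          (Pi.single i 1)
        = fderiv ℝ (fun y => fderiv ℝ u y (Pi.single i 1)) p (Pi.single i 1) - ε * 2 := by
      intro i
      rw [(hev i).fderiv_eq]
      rw [fderiv_fun_sub (hdiff2 i) (hlin i p).differentiableAt]
      rw [ContinuousLinearMap.sub_apply]
      congr 1
      rw [(hlin i p).fderiv]
      simp [projCLM]
    rw [Fin.sum_univ_two, Fin.sum_univ_two, term 0, term 1]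
    ring

theorem aux_minPrinciple {u : (Fin 2 → ℝ) → ℝ} {K F : Set (Fin 2 → ℝ)}
    (hK : IsCompact K) (hFK : F ⊆ K) (hFne : F.Nonempty) (hFcomp : IsCompact F)
    (hcont : ContinuousOn u K)
    (hint : ∀ x ∈ K \ F, x ∈ interior K ∧ (∀ᶠ y in nhds x, DifferentiableAt ℝ u y)
        ∧ (∀ i : Fin 2, DifferentiableAt ℝ (fun y => fderiv ℝ u y (Pi.single i 1)) x)
        ∧ laplacian2 u x ≤ 0) :
    ∃ y ∈ F, ∀ x ∈ K, u y ≤ u x := by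
  obtain ⟨y₀, hy₀F, hy₀min⟩ := hFcomp.exists_isMinOn hFne (hcont.mono hFK)
  refine ⟨y₀, hy₀F, fun x hx => ?_⟩
  -- bound for q on K
  obtain ⟨C, hC⟩ := (hK.image_of_continuousOn ((auxQ_cont 0).continuousOn)).bddAbove
  simp only [mem_upperBounds, Set.mem_image] at hC
  have hCb : ∀ y ∈ K, auxQ 0 y ≤ C := fun y hy => hC _ ⟨y, hy, rfl⟩
  have hC0 : 0 ≤ C := le_trans (auxQ_nonneg 0 x) (hCb x hx)
  -- for every ε > 0, u y₀ ≤ u x + ε * C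
  have key : ∀ ε : ℝ, 0 < ε → u y₀ ≤ u x + ε * C := by
    intro ε hε
    set v : (Fin 2 → ℝ) → ℝ := fun z => u z - ε * auxQ 0 z with hv
    have hvcont : ContinuousOn v K :=
      hcont.sub (((auxQ_cont 0).continuousOn).const_smul ε)
    obtain ⟨p, hpK, hpmin⟩ := hK.exists_isMinOn ⟨x, hx⟩ hvcont
    have hpF : p ∈ F := by
      by_contra hpF
      obtain ⟨hpint, hd1, hd2, hlap⟩ := hint p ⟨hpK, hpF⟩
      obtain ⟨hvd1, hvd2, hvlap⟩ := aux_pert ε hd1 hd2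
      have hlocmin : IsLocalMin v p :=
        hpmin.isLocalMin (mem_interior_iff_mem_nhds.mp hpint)
      have h0 := aux_laplacian_nonneg hvd1 hvd2 hlocmin
      rw [hvlap] at h0
      linarith
    have h1 : v p ≤ v x := hpmin hx
    have h2 : u y₀ ≤ u p := hy₀min hpF
    have h3 : auxQ 0 p ≤ C := hCb p (hFK hpF)
    have h4 : 0 ≤ auxQ 0 x := auxQ_nonneg 0 x
    simp only [hv] at h1
    nlinarith
  -- let ε → 0
  by_contra hcon
  push_neg at hcon
  rcases eq_or_lt_of_le hC0 with hC0' | hC0'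
  · have := key 1 one_pos
    rw [← hC0'] at this
    linarith
  · have hnum : 0 < u y₀ - u x := by linarith
    have hε := key ((u y₀ - u x) / (2 * C)) (div_pos hnum (by linarith))
    have heq : (u y₀ - u x) / (2 * C) * C = (u y₀ - u x) / 2 := by
      field_simp
    rw [heq] at hε
    linarith

theorem aux_phi_hasFDerivAt (c x : Fin 2 → ℝ) (i : Fin 2) (hx : auxQ c x ≠ 0) :
    HasFDerivAt (fun y => (auxQ c y)⁻¹ * (2 * (y i - c i)))
      ((auxQ c x)⁻¹ • ((2:ℝ) • projCLM i)
        + (2 * (x i - c i)) • (-((auxQ c x ^ 2)⁻¹ • auxDQ c x))) x := by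
  have hA : HasFDerivAt (fun y => (auxQ c y)⁻¹)
      (-((auxQ c x ^ 2)⁻¹ • auxDQ c x)) x := by
    have h := (hasDerivAt_inv hx).comp_hasFDerivAt x (hasFDerivAt_auxQ c x)
    simpa [Function.comp_def] using h
  have hB : HasFDerivAt (fun y : Fin 2 → ℝ => 2 * (y i - c i))
      ((2:ℝ) • projCLM i) x :=
    ((projCLM_hasFDerivAt i x).sub_const (c i)).const_mul 2
  exact hA.mul hB

theorem aux_pertlog {u : (Fin 2 → ℝ) → ℝ} {p : Fin 2 → ℝ} (c : Fin 2 → ℝ) (ε : ℝ)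
    (hd1 : ∀ y, DifferentiableAt ℝ u y)
    (hd2 : ∀ i : Fin 2, DifferentiableAt ℝ (fun y => fderiv ℝ u y (Pi.single i 1)) p)
    (hp : auxQ c p ≠ 0) :
    (∀ᶠ y in nhds p, DifferentiableAt ℝ (fun z => u z + ε * Real.log (auxQ c z)) y) ∧
    (∀ i : Fin 2, DifferentiableAt ℝ
      (fun y => fderiv ℝ (fun z => u z + ε * Real.log (auxQ c z)) y (Pi.single i 1)) p) ∧
    laplacian2 (fun z => u z + ε * Real.log (auxQ c z)) p = laplacian2 u p := by
  have hopen : IsOpen {y : Fin 2 → ℝ | auxQ c y ≠ 0} := isOpen_ne.preimage (auxQ_cont c)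
  have hnhds : {y : Fin 2 → ℝ | auxQ c y ≠ 0} ∈ nhds p := hopen.mem_nhds hp
  have hlog : ∀ y : Fin 2 → ℝ, auxQ c y ≠ 0 →
      HasFDerivAt (fun z => ε * Real.log (auxQ c z)) (ε • ((auxQ c y)⁻¹ • auxDQ c y)) y :=
    fun y hy => (hasFDerivAt_logQ c y hy).const_mul ε
  -- formula for fderiv of W
  have hveq : ∀ y : Fin 2 → ℝ, auxQ c y ≠ 0 → ∀ i : Fin 2,
      fderiv ℝ (fun z => u z + ε * Real.log (auxQ c z)) y (Pi.single i 1)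
        = fderiv ℝ u y (Pi.single i 1) + ε * ((auxQ c y)⁻¹ * (2 * (y i - c i))) := by
    intro y hy i
    have h1 := (hd1 y).hasFDerivAt.fun_add (hlog y hy)
    rw [h1.fderiv]
    simp [auxDQ_apply]
    try ring
  have hev : ∀ i : Fin 2,
      (fun y => fderiv ℝ (fun z => u z + ε * Real.log (auxQ c z)) y (Pi.single i 1))
        =ᶠ[nhds p]
      (fun y => fderiv ℝ u y (Pi.single i 1) + ε * ((auxQ c y)⁻¹ * (2 * (y i - c i)))) := by
    intro i
    filter_upwards [hnhds] with y hy
    exact hveq y hy i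
  have hphi : ∀ i : Fin 2, DifferentiableAt ℝ
      (fun y : Fin 2 → ℝ => ε * ((auxQ c y)⁻¹ * (2 * (y i - c i)))) p :=
    fun i => ((aux_phi_hasFDerivAt c p i hp).differentiableAt).const_mul ε
  have hd2' : ∀ i : Fin 2, DifferentiableAt ℝ
      (fun y => fderiv ℝ (fun z => u z + ε * Real.log (auxQ c z)) y (Pi.single i 1)) p := by
    intro i
    rw [(hev i).differentiableAt_iff]
    exact (hd2 i).add (hphi i)
  refine ⟨?_, hd2', ?_⟩
  · filter_upwards [hnhds] with y hy
    exact (hd1 y).add (hlog y hy).differentiableAt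
  · -- laplacian computation
    have hev2 : ∀ i : Fin 2,
        (fun y => fderiv ℝ (fun z => Real.log (auxQ c z)) y (Pi.single i 1))
          =ᶠ[nhds p]
        (fun y => (auxQ c y)⁻¹ * (2 * (y i - c i))) := by
      intro i
      filter_upwards [hnhds] with y hy
      exact fderiv_logQ_apply c y i hy
    have term : ∀ i : Fin 2,
        fderiv ℝ (fun y => fderiv ℝ (fun z => u z + ε * Real.log (auxQ c z)) y (Pi.single i 1)) p
          (Pi.single i 1)
        = fderiv ℝ (fun y => fderiv ℝ u y (Pi.single i 1)) p (Pi.single i 1)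
          + ε * fderiv ℝ (fun y => fderiv ℝ (fun z => Real.log (auxQ c z)) y (Pi.single i 1)) p
              (Pi.single i 1) := by
      intro i
      rw [(hev i).fderiv_eq, (hev2 i).fderiv_eq]
      have hphi' := (aux_phi_hasFDerivAt c p i hp).differentiableAt
      rw [fderiv_fun_add (hd2 i) (hphi i)]
      rw [ContinuousLinearMap.add_apply]
      congr 1
      rw [fderiv_const_mul hphi' ε]
      simp
    have hlogQ := laplacian2_logQ c p hp
    unfold laplacian2 at hlogQ ⊢
    rw [Fin.sum_univ_two, Fin.sum_univ_two, term 0, term 1]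
    rw [Fin.sum_univ_two] at hlogQ
    linear_combination ε * hlogQ

theorem aux_compact_sub (c : Fin 2 → ℝ) {b : ℝ} (hb : 0 ≤ b) :
    IsCompact {y : Fin 2 → ℝ | auxQ c y ≤ b} := by
  apply Metric.isCompact_of_isClosed_isBounded
  · exact isClosed_Iic.preimage (auxQ_cont c)
  · apply Bornology.IsBounded.subset (Metric.isBounded_closedBall (x := c) (r := Real.sqrt b))
    intro y hy
    simp only [Set.mem_setOf_eq] at hy
    rw [Metric.mem_closedBall]
    rw [dist_pi_le_iff (Real.sqrt_nonneg b)]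
    intro i
    rw [Real.dist_eq]
    apply Real.abs_le_sqrt
    calc (y i - c i) ^ 2 ≤ auxQ c y := by
          unfold auxQ
          exact Finset.single_le_sum (f := fun j => (y j - c j) ^ 2) (fun j _ => sq_nonneg _) (Finset.mem_univ i)
      _ ≤ b := hy

theorem aux_sphere_nonempty (c : Fin 2 → ℝ) {a : ℝ} (ha : 0 ≤ a) :
    ∃ y : Fin 2 → ℝ, auxQ c y = a := by
  refine ⟨Function.update c 0 (c 0 + Real.sqrt a), ?_⟩
  unfold auxQ
  rw [Fin.sum_univ_two]
  rw [Function.update_self, Function.update_of_ne (by decide)]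
  simp [Real.sq_sqrt ha]

theorem aux_sphere_min {u : (Fin 2 → ℝ) → ℝ}
    (hd1 : ∀ y, DifferentiableAt ℝ u y)
    (hd2 : ∀ (p : Fin 2 → ℝ) (i : Fin 2),
      DifferentiableAt ℝ (fun y => fderiv ℝ u y (Pi.single i 1)) p)
    (hucont : Continuous u)
    (hpos : ∀ x, 0 < u x) (hsup : ∀ x, laplacian2 u x ≤ 0)
    (c : Fin 2 → ℝ) {a : ℝ} (ha : 0 < a) :
    ∃ y, auxQ c y = a ∧ ∀ z, u y ≤ u z := by
  set F : Set (Fin 2 → ℝ) := {y | auxQ c y = a} with hF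
  have hFclosed : IsClosed F := isClosed_singleton.preimage (auxQ_cont c)
  have hFsub : F ⊆ {y | auxQ c y ≤ a} := fun y hy => le_of_eq hy
  have hFcomp : IsCompact F := (aux_compact_sub c ha.le).of_isClosed_subset hFclosed hFsub
  have hFne : F.Nonempty := aux_sphere_nonempty c ha.le
  obtain ⟨y₀, hy₀F, hy₀min⟩ := hFcomp.exists_isMinOn hFne hucont.continuousOn
  refine ⟨y₀, hy₀F, fun z => ?_⟩
  rcases le_total (auxQ c z) a with hz | hz
  · -- z inside the disc: ball minimum principle
    have hmp := aux_minPrinciple (u := u) (K := {y | auxQ c y ≤ a}) (F := F)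
      (aux_compact_sub c ha.le) hFsub hFne hFcomp hucont.continuousOn ?_
    · obtain ⟨y, hyF, hymin⟩ := hmp
      exact le_trans (hy₀min hyF) (hymin z hz)
    · intro x hx
      have hxlt : auxQ c x < a := lt_of_le_of_ne hx.1 hx.2
      refine ⟨?_, Filter.Eventually.of_forall hd1, hd2 x, hsup x⟩
      have hopen : IsOpen {y : Fin 2 → ℝ | auxQ c y < a} :=
        isOpen_lt (auxQ_cont c) continuous_const
      have hxmem : x ∈ {y : Fin 2 → ℝ | auxQ c y < a} := hxlt
      exact interior_maximal (fun y (hy : auxQ c y < a) => le_of_lt hy) hopen hxmem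
  · -- z outside: annulus with log comparison, then ε → 0
    have hQz : 0 < auxQ c z := lt_of_lt_of_le ha hz
    have hkey : ∀ ε : ℝ, 0 < ε →
        u y₀ ≤ u z + ε * (Real.log (auxQ c z) - Real.log a) := by
      intro ε hε
      set b : ℝ := Real.exp (u z / ε + 1) * auxQ c z with hbdef
      have hexp1 : (1:ℝ) ≤ Real.exp (u z / ε + 1) := by
        rw [← Real.exp_zero]
        apply Real.exp_le_exp.mpr
        have := (hpos z)
        positivity
      have hzb : auxQ c z ≤ b := le_mul_of_one_le_left hQz.le hexp1
      have hab : a ≤ b := le_trans hz hzb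
      have hbpos : 0 < b := lt_of_lt_of_le hQz hzb
      set W : (Fin 2 → ℝ) → ℝ := fun y => u y + ε * Real.log (auxQ c y) with hW
      set K : Set (Fin 2 → ℝ) := {y | a ≤ auxQ c y ∧ auxQ c y ≤ b} with hK
      set Fb : Set (Fin 2 → ℝ) := {y | auxQ c y = a} ∪ {y | auxQ c y = b} with hFb
      have hKclosed : IsClosed K :=
        (isClosed_le continuous_const (auxQ_cont c)).inter
          (isClosed_le (auxQ_cont c) continuous_const)
      have hKcomp : IsCompact K :=
        (aux_compact_sub c hbpos.le).of_isClosed_subset hKclosed (fun y hy => hy.2)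
      have hFbK : Fb ⊆ K := by
        rintro y (hy | hy)
        · exact ⟨le_of_eq hy.symm, le_trans (le_of_eq hy) hab⟩
        · exact ⟨le_trans hab (le_of_eq hy.symm), le_of_eq hy⟩
      have hFbne : Fb.Nonempty := by
        obtain ⟨y, hy⟩ := aux_sphere_nonempty c ha.le
        exact ⟨y, Or.inl hy⟩
      have hFbclosed : IsClosed Fb :=
        (isClosed_singleton.preimage (auxQ_cont c)).union
          (isClosed_singleton.preimage (auxQ_cont c))
      have hFbcomp : IsCompact Fb := hKcomp.of_isClosed_subset hFbclosed hFbK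
      have hWcont : ContinuousOn W K := by
        intro y hy
        have hQy : auxQ c y ≠ 0 := ne_of_gt (lt_of_lt_of_le ha hy.1)
        exact (((hucont.continuousAt).add
          (continuousAt_const.mul ((Real.continuousAt_log hQy).comp
            ((auxQ_cont c).continuousAt)))).continuousWithinAt)
      have hmp := aux_minPrinciple (u := W) (K := K) (F := Fb)
        hKcomp hFbK hFbne hFbcomp hWcont ?_
      · obtain ⟨y, hyFb, hymin⟩ := hmp
        have hzK : z ∈ K := ⟨hz, hzb⟩
        have hWyz := hymin z hzK
        rcases hyFb with hya | hyb
        · -- inner circle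
          have hya' : auxQ c y = a := hya
          have : u y + ε * Real.log a ≤ u z + ε * Real.log (auxQ c z) := by
            have h0 : W y ≤ W z := hWyz
            simpa [hW, hya'] using h0
          have h2 : u y₀ ≤ u y := hy₀min hya
          nlinarith
        · -- outer circle: contradiction with positivity
          exfalso
          have hlogb : Real.log b = u z / ε + 1 + Real.log (auxQ c z) := by
            rw [hbdef, Real.log_mul (Real.exp_ne_zero _) (ne_of_gt hQz), Real.log_exp]
          have hyb' : auxQ c y = b := hyb
          have hWle : u y + ε * Real.log b ≤ u z + ε * Real.log (auxQ c z) := by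
            have h0 : W y ≤ W z := hWyz
            simpa [hW, hyb'] using h0
          rw [hlogb] at hWle
          have hdiv : ε * (u z / ε) = u z := by field_simp
          nlinarith [hpos y]
      · intro x hx
        have hxK : a ≤ auxQ c x ∧ auxQ c x ≤ b := hx.1
        have hxa : a < auxQ c x := by
          rcases lt_or_eq_of_le hxK.1 with h | h
          · exact h
          · exact absurd (Or.inl h.symm) hx.2
        have hxb : auxQ c x < b := by
          rcases lt_or_eq_of_le hxK.2 with h | h
          · exact h
          · exact absurd (Or.inr h) hx.2
        have hQx : auxQ c x ≠ 0 := ne_of_gt (lt_of_lt_of_le ha hxK.1)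
        obtain ⟨hp1, hp2, hp3⟩ := aux_pertlog c ε hd1 (hd2 x) hQx
        refine ⟨?_, hp1, hp2, ?_⟩
        · have hopen : IsOpen {y : Fin 2 → ℝ | a < auxQ c y ∧ auxQ c y < b} :=
            (isOpen_lt continuous_const (auxQ_cont c)).inter
              (isOpen_lt (auxQ_cont c) continuous_const)
          have hxmem : x ∈ {y : Fin 2 → ℝ | a < auxQ c y ∧ auxQ c y < b} := ⟨hxa, hxb⟩
          exact interior_maximal
            (fun y (hy : a < auxQ c y ∧ auxQ c y < b) =>
              show a ≤ auxQ c y ∧ auxQ c y ≤ b from ⟨hy.1.le, hy.2.le⟩) hopen hxmem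
        · rw [hp3]; exact hsup x
    -- let ε → 0
    have hD : 0 ≤ Real.log (auxQ c z) - Real.log a := by
      have := Real.log_le_log ha hz
      linarith
    by_contra hcon
    push_neg at hcon
    set D := Real.log (auxQ c z) - Real.log a with hDdef
    have hεpos : 0 < (u y₀ - u z) / (2 * (D + 1)) := by
      apply div_pos (by linarith) (by linarith)
    have h1 := hkey _ hεpos
    have h2 : (u y₀ - u z) / (2 * (D + 1)) * D ≤ (u y₀ - u z) / 2 := by
      rw [div_mul_eq_mul_div]
      rw [div_le_div_iff₀ (by linarith) (by norm_num)]
      nlinarith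
    linarith

theorem aux_liouville {u : (Fin 2 → ℝ) → ℝ}
    (hd1 : ∀ y, DifferentiableAt ℝ u y)
    (hd2 : ∀ (p : Fin 2 → ℝ) (i : Fin 2),
      DifferentiableAt ℝ (fun y => fderiv ℝ u y (Pi.single i 1)) p)
    (hucont : Continuous u)
    (hpos : ∀ x, 0 < u x) (hsup : ∀ x, laplacian2 u x ≤ 0) :
    ∀ x z, u x = u z := by
  obtain ⟨y₁, _, hy₁⟩ := aux_sphere_min hd1 hd2 hucont hpos hsup 0 one_pos
  suffices h : ∀ z, u z = u y₁ by
    intro x z; rw [h x, h z]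
  intro z
  apply eq_of_forall_dist_le
  intro η hη
  obtain ⟨δ, hδ, hcont⟩ := Metric.continuousAt_iff.mp (hucont.continuousAt (x := z)) η hη
  have ha : (0:ℝ) < (δ/2)^2 := by positivity
  obtain ⟨y, hyQ, hymin⟩ := aux_sphere_min hd1 hd2 hucont hpos hsup z ha
  have hyval : u y = u y₁ := le_antisymm (hymin y₁) (hy₁ y)
  have hdist : dist y z ≤ δ/2 := by
    rw [dist_pi_le_iff (by positivity)]
    intro i
    rw [Real.dist_eq]
    have h1 : (y i - z i) ^ 2 ≤ (δ/2)^2 := by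
      rw [← hyQ]
      unfold auxQ
      exact Finset.single_le_sum (f := fun j => (y j - z j) ^ 2)
        (fun j _ => sq_nonneg _) (Finset.mem_univ i)
    have := Real.abs_le_sqrt h1
    rwa [Real.sqrt_sq (by positivity)] at this
  have hlt : dist y z < δ := lt_of_le_of_lt hdist (by linarith)
  have := hcont hlt
  rw [hyval] at this
  rw [dist_comm] at this
  exact this.le


/-- Let `w` be a `C²` function on `ℝ²` with `0 < w ≤ 1` satisfying
`(1/2)Δw = V(w² - w)`, where `V ≥ 0` is bounded and not identically zero on the
region where `w < 1`.  If `w < 1` everywhere, then `w` would be a nonconstant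
bounded superharmonic function on `ℝ²`, contradicting the recurrence of planar
Brownian motion (bounded superharmonic functions on `ℝ²` are constant); hence
`w ≡ 1`. -/
theorem superharmonic_dichotomy (w V : (Fin 2 → ℝ) → ℝ)
    (hw : ContDiff ℝ 2 w)
    (hwpos : ∀ x, 0 < w x) (hwle : ∀ x, w x ≤ 1)
    (hV0 : ∀ x, 0 ≤ V x) (hVbd : ∃ M : ℝ, ∀ x, V x ≤ M)
    (hpde : ∀ x, (1 / 2 : ℝ) * laplacian2 w x = V x * ((w x) ^ 2 - w x))
    (hVnz : (∀ x, w x < 1) → ∃ x, x ∈ {y | w y < 1} ∧ V x ≠ 0) :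
    ∀ x, w x = 1 := by
  intro x
  have hd1 : ∀ y, DifferentiableAt ℝ w y :=
    fun y => (hw.differentiable (by norm_num)).differentiableAt
  have hd2 : ∀ (p : Fin 2 → ℝ) (i : Fin 2),
      DifferentiableAt ℝ (fun y => fderiv ℝ w y (Pi.single i 1)) p := by
    intro p i
    have hf : ContDiff ℝ 1 (fderiv ℝ w) := hw.fderiv_right (by norm_num)
    exact ((hf.clm_apply contDiff_const).differentiable (by norm_num)).differentiableAt
  have hsup : ∀ z, laplacian2 w z ≤ 0 := by
    intro z
    have h := hpde z
    have h1 : w z ^ 2 - w z ≤ 0 := by nlinarith [hwpos z, hwle z]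
    have h2 := mul_nonpos_of_nonneg_of_nonpos (hV0 z) h1
    linarith
  have hconst := aux_liouville hd1 hd2 hw.continuous hwpos hsup
  by_contra hx1
  have hxlt : w x < 1 := lt_of_le_of_ne (hwle x) hx1
  have hall : ∀ z, w z < 1 := fun z => (hconst z x) ▸ hxlt
  obtain ⟨x', _, hVx'⟩ := hVnz hall
  have hlap0 : laplacian2 w x' = 0 := by
    have hwc : w = fun _ => w x := funext (fun z => hconst z x)
    rw [hwc]
    simp [laplacian2]
  have hp : V x' * (w x' ^ 2 - w x') = 0 := by
    have := hpde x'
    rw [hlap0] at this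
    linarith
  have hz : w x' ^ 2 - w x' = 0 := by
    rcases mul_eq_zero.mp hp with h | h
    · exact absurd h hVx'
    · exact h
  nlinarith [hwpos x', hall x']
end
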